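/- A function g : ℤⁿ → ℝ ∪ {+∞} with nonempty effective domain is L♮-convex if and only if the function g̃ : ℤ^{n+1} → ℝ ∪ {+∞} defined by g̃(p₀, p) = g(p - p₀·1), where 1 = (1,...,1), is submodular in n+1 variables. -/

import Mathlib

/-- The set of multimodular directions
`F = {-e₁, e₁-e₂, e₂-e₃, …, e_{n-1}-eₙ, eₙ}` (1-indexed unit vectors). -/
def mmDir (n : ℕ) : Set (Fin n → ℤ) :=
  {d | ∃ k ≤ n, d = fun j : Fin n =>
    (if (j : ℕ) + 1 = k then 1 else 0) - (if (j : ℕ) + 1 = k + 1 then 1 else 0)}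

/-- `f : ℤⁿ → ℝ ∪ {+∞}` is multimodular. -/
def Multimodular {n : ℕ} (f : (Fin n → ℤ) → WithTop ℝ) : Prop :=
  ∀ z : Fin n → ℤ, f z ≠ ⊤ →
    ∀ d ∈ mmDir n, ∀ d' ∈ mmDir n, d ≠ d' →
      f z + f (z + d + d') ≤ f (z + d) + f (z + d')

/-- Submodularity on `ℤᵐ`. -/
def Submodular {m : ℕ} (h : (Fin m → ℤ) → WithTop ℝ) : Prop :=
  ∀ x y : Fin m → ℤ, h (x ⊔ y) + h (x ⊓ y) ≤ h x + h y

/-- L♮-convexity via discrete midpoint convexity. -/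
def LnatConvex {n : ℕ} (g : (Fin n → ℤ) → WithTop ℝ) : Prop :=
  ∀ p q : Fin n → ℤ,
    g (fun j => Int.fdiv (p j + q j + 1) 2) + g (fun j => Int.fdiv (p j + q j) 2)
      ≤ g p + g q

lemma fdiv2_spec (w : ℤ) : 2 * (w.fdiv 2) ≤ w ∧ w < 2 * (w.fdiv 2) + 2 := by
  rw [Int.fdiv_eq_ediv_of_nonneg _ (by norm_num)]
  omega

/-- Discrete midpoint convexity implies submodularity. -/
lemma dmc_submodular {m : ℕ} (h : (Fin m → ℤ) → WithTop ℝ)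
    (H : ∀ p q : Fin m → ℤ,
      h (fun j => Int.fdiv (p j + q j + 1) 2) + h (fun j => Int.fdiv (p j + q j) 2)
        ≤ h p + h q) : Submodular h := by
  suffices key : ∀ K : ℕ, ∀ p q : Fin m → ℤ, (∀ j, (p j - q j).natAbs ≤ K) →
      h (p ⊔ q) + h (p ⊓ q) ≤ h p + h q by
    intro p q
    exact key (Finset.univ.sup fun j => (p j - q j).natAbs) p q
      (fun j => Finset.le_sup (f := fun j => (p j - q j).natAbs) (Finset.mem_univ j))
  intro K
  induction K using Nat.strong_induction_on with
  | _ K IH =>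
    intro p q hK
    by_cases hb : K ≤ 1
    · have e1 : p ⊔ q = fun j => Int.fdiv (p j + q j + 1) 2 := by
        funext j
        have f1 := fdiv2_spec (p j + q j + 1)
        have := hK j
        simp only [Pi.sup_apply, max_def]
        split_ifs <;> omega
      have e2 : p ⊓ q = fun j => Int.fdiv (p j + q j) 2 := by
        funext j
        have f1 := fdiv2_spec (p j + q j)
        have := hK j
        simp only [Pi.inf_apply, min_def]
        split_ifs <;> omega
      rw [e1, e2]
      exact H p q
    · push_neg at hb
      by_cases htop : h p + h q = ⊤
      · rw [htop]; exact le_top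
      set r : Fin m → ℤ := fun j => Int.fdiv (p j + q j + 1) 2 with hr
      set s : Fin m → ℤ := fun j => Int.fdiv (p j + q j) 2 with hs
      have Fr : ∀ j, 2 * r j ≤ p j + q j + 1 ∧ p j + q j + 1 < 2 * r j + 2 :=
        fun j => fdiv2_spec _
      have Fs : ∀ j, 2 * s j ≤ p j + q j ∧ p j + q j < 2 * s j + 2 :=
        fun j => fdiv2_spec _
      have hdmc : h r + h s ≤ h p + h q := H p q
      have hRS : h r + h s ≠ ⊤ := fun hT => htop (top_le_iff.mp (hT ▸ hdmc))
      -- the four auxiliary pairs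
      set x1 : Fin m → ℤ := p ⊔ r with hx1
      set y1 : Fin m → ℤ := q ⊔ s with hy1
      set x2 : Fin m → ℤ := p ⊓ r with hx2
      set y2 : Fin m → ℤ := q ⊓ s with hy2
      set m1 : Fin m → ℤ := x1 ⊓ y1 with hm1
      set m2 : Fin m → ℤ := x2 ⊔ y2 with hm2
      have B1 : ∀ j, (p j - r j).natAbs ≤ K - 1 := by
        intro j; have := Fr j; have := Fs j; have := hK j; omega
      have B2 : ∀ j, (q j - s j).natAbs ≤ K - 1 := by
        intro j; have := Fr j; have := Fs j; have := hK j; omega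
      have B3 : ∀ j, (x1 j - y1 j).natAbs ≤ K - 1 := by
        intro j
        have := Fr j; have := Fs j; have := hK j
        simp only [hx1, hy1, Pi.sup_apply, max_def]
        split_ifs <;> omega
      have B4 : ∀ j, (x2 j - y2 j).natAbs ≤ K - 1 := by
        intro j
        have := Fr j; have := Fs j; have := hK j
        simp only [hx2, hy2, Pi.inf_apply, min_def]
        split_ifs <;> omega
      have B5 : ∀ j, (m1 j - m2 j).natAbs ≤ K - 1 := by
        intro j
        have := Fr j; have := Fs j; have := hK j
        simp only [hm1, hm2, hx1, hy1, hx2, hy2, Pi.sup_apply, Pi.inf_apply,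
          max_def, min_def]
        split_ifs <;> omega
      have E1 : x1 ⊔ y1 = p ⊔ q := by
        funext j
        have := Fr j; have := Fs j; have := hK j
        simp only [hx1, hy1, Pi.sup_apply, max_def]
        split_ifs <;> omega
      have E2 : x2 ⊓ y2 = p ⊓ q := by
        funext j
        have := Fr j; have := Fs j; have := hK j
        simp only [hx2, hy2, Pi.inf_apply, min_def]
        split_ifs <;> omega
      have E3 : m1 ⊔ m2 = r := by
        funext j
        have := Fr j; have := Fs j; have := hK j
        simp only [hm1, hm2, hx1, hy1, hx2, hy2, Pi.sup_apply, Pi.inf_apply,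
          max_def, min_def]
        split_ifs <;> omega
      have E4 : m1 ⊓ m2 = s := by
        funext j
        have := Fr j; have := Fs j; have := hK j
        simp only [hm1, hm2, hx1, hy1, hx2, hy2, Pi.sup_apply, Pi.inf_apply,
          max_def, min_def]
        split_ifs <;> omega
      have I1 : h x1 + h x2 ≤ h p + h r := IH (K - 1) (by omega) p r B1
      have I2 : h y1 + h y2 ≤ h q + h s := IH (K - 1) (by omega) q s B2
      have I3 : h (p ⊔ q) + h m1 ≤ h x1 + h y1 := by
        have := IH (K - 1) (by omega) x1 y1 B3
        rwa [E1] at this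
      have I4 : h m2 + h (p ⊓ q) ≤ h x2 + h y2 := by
        have := IH (K - 1) (by omega) x2 y2 B4
        rwa [E2] at this
      have I5 : h r + h s ≤ h m1 + h m2 := by
        have := IH (K - 1) (by omega) m1 m2 B5
        rwa [E3, E4] at this
      have chain : (h (p ⊔ q) + h (p ⊓ q)) + (h r + h s)
          ≤ (h p + h q) + (h r + h s) := by
        calc (h (p ⊔ q) + h (p ⊓ q)) + (h r + h s)
            ≤ (h (p ⊔ q) + h (p ⊓ q)) + (h m1 + h m2) := add_le_add_right I5 _
          _ = (h (p ⊔ q) + h m1) + (h m2 + h (p ⊓ q)) := by abel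
          _ ≤ (h x1 + h y1) + (h x2 + h y2) := add_le_add I3 I4
          _ = (h x1 + h x2) + (h y1 + h y2) := by abel
          _ ≤ (h p + h r) + (h q + h s) := add_le_add I1 I2
          _ = (h p + h q) + (h r + h s) := by abel
      exact (WithTop.add_le_add_iff_right hRS).mp chain

theorem lnatConvex_iff_submodular_lift {n : ℕ} (g : (Fin n → ℤ) → WithTop ℝ)
    (hdom : ∃ p, g p ≠ ⊤) :
    LnatConvex g ↔
      Submodular (fun p : Fin (n + 1) → ℤ =>
        g (fun i : Fin n => p i.succ - p 0)) := by
  constructor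
  · -- forward: DMC g → DMC g̃ → submodular g̃
    intro hg
    apply dmc_submodular
    intro x y
    simp only []
    rcases Int.even_or_odd (x 0 + y 0) with he | ho
    · obtain ⟨t, ht⟩ := he
      have e1 : (fun i : Fin n =>
            Int.fdiv (x i.succ + y i.succ + 1) 2 - Int.fdiv (x 0 + y 0 + 1) 2)
          = fun i => Int.fdiv ((x i.succ - x 0) + (y i.succ - y 0) + 1) 2 := by
        funext i
        have f1 := fdiv2_spec (x i.succ + y i.succ + 1)
        have f2 := fdiv2_spec (x 0 + y 0 + 1)
        have f3 := fdiv2_spec ((x i.succ - x 0) + (y i.succ - y 0) + 1)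
        omega
      have e2 : (fun i : Fin n =>
            Int.fdiv (x i.succ + y i.succ) 2 - Int.fdiv (x 0 + y 0) 2)
          = fun i => Int.fdiv ((x i.succ - x 0) + (y i.succ - y 0)) 2 := by
        funext i
        have f1 := fdiv2_spec (x i.succ + y i.succ)
        have f2 := fdiv2_spec (x 0 + y 0)
        have f3 := fdiv2_spec ((x i.succ - x 0) + (y i.succ - y 0))
        omega
      rw [e1, e2]
      exact hg _ _
    · obtain ⟨t, ht⟩ := ho
      have e1 : (fun i : Fin n =>
            Int.fdiv (x i.succ + y i.succ + 1) 2 - Int.fdiv (x 0 + y 0 + 1) 2)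
          = fun i => Int.fdiv ((x i.succ - x 0) + (y i.succ - y 0)) 2 := by
        funext i
        have f1 := fdiv2_spec (x i.succ + y i.succ + 1)
        have f2 := fdiv2_spec (x 0 + y 0 + 1)
        have f3 := fdiv2_spec ((x i.succ - x 0) + (y i.succ - y 0))
        omega
      have e2 : (fun i : Fin n =>
            Int.fdiv (x i.succ + y i.succ) 2 - Int.fdiv (x 0 + y 0) 2)
          = fun i => Int.fdiv ((x i.succ - x 0) + (y i.succ - y 0) + 1) 2 := by
        funext i
        have f1 := fdiv2_spec (x i.succ + y i.succ)
        have f2 := fdiv2_spec (x 0 + y 0)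
        have f3 := fdiv2_spec ((x i.succ - x 0) + (y i.succ - y 0) + 1)
        omega
      rw [e1, e2, add_comm (g _)]
      exact hg _ _
  · -- backward: submodular g̃ → translation submodularity → DMC g
    intro hsub
    have C : ∀ α : ℤ, 0 ≤ α → ∀ p q : Fin n → ℤ,
        g (fun j => max (p j - α) (q j)) + g (fun j => min (p j) (q j + α))
          ≤ g p + g q := by
      intro α hα p q
      have h0 := hsub (Fin.cons 0 p) (Fin.cons α (fun i => q i + α))
      have e1 : (fun i : Fin n =>
            ((Fin.cons 0 p : Fin (n+1) → ℤ) ⊔ Fin.cons α (fun i => q i + α)) i.succ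
              - ((Fin.cons 0 p : Fin (n+1) → ℤ) ⊔ Fin.cons α (fun i => q i + α)) 0)
          = fun j => max (p j - α) (q j) := by
        funext i
        simp only [Pi.sup_apply, Fin.cons_succ, Fin.cons_zero]
        omega
      have e2 : (fun i : Fin n =>
            ((Fin.cons 0 p : Fin (n+1) → ℤ) ⊓ Fin.cons α (fun i => q i + α)) i.succ
              - ((Fin.cons 0 p : Fin (n+1) → ℤ) ⊓ Fin.cons α (fun i => q i + α)) 0)
          = fun j => min (p j) (q j + α) := by
        funext i
        simp only [Pi.inf_apply, Fin.cons_succ, Fin.cons_zero]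
        omega
      have e3 : (fun i : Fin n =>
            (Fin.cons 0 p : Fin (n+1) → ℤ) i.succ - (Fin.cons 0 p : Fin (n+1) → ℤ) 0)
          = p := by
        funext i
        simp [Fin.cons_succ, Fin.cons_zero]
      have e4 : (fun i : Fin n =>
            (Fin.cons α (fun i => q i + α) : Fin (n+1) → ℤ) i.succ
              - (Fin.cons α (fun i => q i + α) : Fin (n+1) → ℤ) 0)
          = q := by
        funext i
        simp [Fin.cons_succ, Fin.cons_zero]
      simp only [] at h0
      rw [e1, e2, e3, e4] at h0
      exact h0
    have key : ∀ K : ℕ, ∀ p q : Fin n → ℤ, (∀ j, (p j - q j).natAbs ≤ K) →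
        g (fun j => Int.fdiv (p j + q j + 1) 2) + g (fun j => Int.fdiv (p j + q j) 2)
          ≤ g p + g q := by
      intro K
      induction K using Nat.strong_induction_on with
      | _ K IH =>
        intro p q hK
        by_cases hb : K ≤ 1
        · have h0 := C 0 le_rfl p q
          have e1 : (fun j => max (p j - 0) (q j)) = fun j => Int.fdiv (p j + q j + 1) 2 := by
            funext j
            have f1 := fdiv2_spec (p j + q j + 1)
            have := hK j
            omega
          have e2 : (fun j => min (p j) (q j + 0)) = fun j => Int.fdiv (p j + q j) 2 := by
            funext j
            have f1 := fdiv2_spec (p j + q j)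
            have := hK j
            omega
          rwa [e1, e2] at h0
        · push_neg at hb
          set α : ℤ := ((K : ℤ) + 1) / 2 with hα
          have hα0 : 0 ≤ α := by omega
          have hα1 : 1 ≤ α ∧ (K : ℤ) ≤ 2 * α ∧ α ≤ (K : ℤ) - 1 := by omega
          set a : Fin n → ℤ := fun j => max (p j - α) (q j) with ha
          set b : Fin n → ℤ := fun j => min (p j) (q j + α) with hbdef
          set a' : Fin n → ℤ := fun j => max (a j - α) (b j) with ha'
          set b' : Fin n → ℤ := fun j => min (a j) (b j + α) with hb'
          have I1 : g a + g b ≤ g p + g q := C α hα0 p q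
          have I2 : g a' + g b' ≤ g a + g b := C α hα0 a b
          have bound : ∀ j, (a' j - b' j).natAbs ≤ K - 1 := by
            intro j
            have := hK j
            simp only [ha', hb', ha, hbdef]
            omega
          have hsum : ∀ j, a' j + b' j = p j + q j := by
            intro j
            simp only [ha', hb', ha, hbdef]
            omega
          have I3 := IH (K - 1) (by omega) a' b' bound
          have e1 : (fun j => Int.fdiv (a' j + b' j + 1) 2)
              = fun j => Int.fdiv (p j + q j + 1) 2 := by
            funext j; rw [hsum j]
          have e2 : (fun j => Int.fdiv (a' j + b' j) 2)
              = fun j => Int.fdiv (p j + q j) 2 := by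
            funext j; rw [hsum j]
          rw [e1, e2] at I3
          exact I3.trans (I2.trans I1)
    intro p q
    exact key (Finset.univ.sup fun j => (p j - q j).natAbs) p q
      (fun j => Finset.le_sup (f := fun j => (p j - q j).natAbs) (Finset.mem_univ j))
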